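/- There exist two i.i.d. sequences Y = (Y_n) and Z = (Z_n) of ±1-valued random variables, each with trivial tail sigma-field, such that the tail sigma-field of the joint sequence ((Y_n, Z_n) : n ∈ ℕ) is nontrivial. Concretely: let P be uniform on [0,1]; given P, let X = (X_n) be i.i().d. with P[X_1 = 1 | P] = P, and Y = (Y_n) i.i.d. fair ±1 signs independent of X given P; set Z_n = X_n Y_n. Then Y and Z are i.i.d. sequences independent of P with trivial tail sigma-fields, but P is measurable with respect to the tail sigma-field of ((Y_n, Z_n)), hence that tail sigma-field is not trivial. -/

import Mathlib

open ProbabilityTheory MeasureTheory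

/-- The tail sigma-field `⋂ k, σ(W n : n ≥ k)` of a sequence of random variables. -/
def tailSigma {Ω β : Type*} [MeasurableSpace β] (W : ℕ → Ω → β) : MeasurableSpace Ω :=
  ⨅ k : ℕ, ⨆ n : ℕ, ⨆ _ : k ≤ n, MeasurableSpace.comap (W n) inferInstance

/-- A sub-sigma-field is trivial for `μ` if all its events have probability `0` or `1`. -/
def TrivialSigma {Ω : Type*} {mΩ : MeasurableSpace Ω} (μ : Measure Ω)
    (m : MeasurableSpace Ω) : Prop :=
  ∀ A : Set Ω, MeasurableSet[m] A → μ A = 0 ∨ μ A = 1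


open Set
open scoped ENNReal Classical

noncomputable section
namespace Stmt6Aux

/-- binary digits -/
def dg (k : ℕ) (x : ℝ) : Bool := decide (⌊2 ^ (k+1) * x⌋ % 2 = 1)

lemma measurable_dg (k : ℕ) : Measurable (dg k) := by
  have h : Measurable fun x : ℝ => ⌊2 ^ (k+1) * x⌋ :=
    Int.measurable_floor.comp (measurable_const_mul _)
  apply measurable_to_countable'
  intro b
  have : dg k ⁻¹' {b} = (fun x : ℝ => ⌊2 ^ (k+1) * x⌋) ⁻¹' {n | decide (n % 2 = 1) = b} := by
    ext x; simp [dg]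
  rw [this]
  exact h (MeasurableSet.of_discrete)
-- floor doubling
lemma floor_double_cases (y : ℝ) : ⌊2*y⌋ = 2*⌊y⌋ ∨ ⌊2*y⌋ = 2*⌊y⌋ + 1 := by
  have h1 : (2:ℤ)*⌊y⌋ ≤ ⌊2*y⌋ := by
    rw [Int.le_floor]; push_cast
    nlinarith [Int.floor_le y]
  have h2 : ⌊2*y⌋ ≤ 2*⌊y⌋ + 1 := by
    have := Int.lt_floor_add_one y
    rw [Int.floor_le_iff]; push_cast; nlinarith
  omega





lemma dg_succ (k : ℕ) (x : ℝ) (c : ℤ) : dg k (2*x - c) = dg (k+1) x := by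
  have h : ⌊2 ^ (k+1) * (2*x - c)⌋ = ⌊2 ^ (k+2) * x⌋ - 2^(k+1) * c := by
    have : (2:ℝ) ^ (k+1) * (2*x - c) = 2 ^ (k+2) * x - ((2^(k+1) * c : ℤ) : ℝ) := by
      push_cast; ring
    rw [this, Int.floor_sub_intCast]
  have hmod : (⌊2 ^ (k+2) * x⌋ - 2^(k+1) * c) % 2 = ⌊2 ^ (k+2) * x⌋ % 2 := by
    have : (2:ℤ) ∣ 2^(k+1) * c := ⟨2^k * c, by ring⟩
    omega
  simp [dg, h, hmod]

lemma dg_zero_false {x : ℝ} (h0 : 0 ≤ x) (h1 : x < 2⁻¹) : dg 0 x = false := by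
  have h : ⌊2^(0+1) * x⌋ = 0 := by
    apply Int.floor_eq_zero_iff.2
    constructor
    · simpa using by nlinarith
    · simpa using by nlinarith
  have h2 : ⌊2^(0+1) * x⌋ % 2 = 0 := by omega
  simp only [dg, h2]
  simp

lemma dg_zero_true {x : ℝ} (h0 : 2⁻¹ ≤ x) (h1 : x < 1) : dg 0 x = true := by
  have h : ⌊2^(0+1) * x⌋ = 1 := by
    apply Int.floor_eq_iff.2
    constructor
    · push_cast; nlinarith
    · push_cast; nlinarith
  have h2 : ⌊2^(0+1) * x⌋ % 2 = 1 := by omega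
  simp only [dg, h2]
  simp

lemma dg_telescope (k : ℕ) (x : ℝ) :
    (if dg k x then ((2:ℝ)⁻¹)^(k+1) else 0)
      = ⌊2^(k+1) * x⌋ / 2^(k+1) - ⌊2^k * x⌋ / 2^k := by
  have hd := floor_double_cases (2^k * x)
  have hx : (2:ℝ) * (2^k * x) = 2^(k+1) * x := by ring
  rw [hx] at hd
  have h2 : ((2:ℝ)^(k+1)) ≠ 0 := by positivity
  have h1 : ((2:ℝ)^k) ≠ 0 := by positivity
  rcases hd with h | h
  · have he : ⌊2^(k+1) * x⌋ % 2 = 0 := by omega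
    have : dg k x = false := by simp only [dg, he]; simp
    rw [this]; simp only [if_neg Bool.false_ne_true]
    rw [h]; push_cast; field_simp; ring
  · have he : ⌊2^(k+1) * x⌋ % 2 = 1 := by omega
    have : dg k x = true := by simp only [dg, he]; simp
    rw [this]; simp only [if_pos rfl]
    rw [h]; push_cast; rw [inv_pow, pow_succ]; field_simp; ring

/-- reconstruction of a number from its digits -/
def dsum (x : ℝ) : ℝ := ∑' k, if dg k x then ((2:ℝ)⁻¹)^(k+1) else 0

lemma ite_summand_le (b : ℕ → Bool) (k : ℕ) :
    (if b k then ((2:ℝ)⁻¹)^(k+1) else 0) ≤ ((2:ℝ)⁻¹)^(k+1) := by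
  split
  · exact le_rfl
  · positivity

lemma ite_summand_nonneg (b : ℕ → Bool) (k : ℕ) :
    0 ≤ (if b k then ((2:ℝ)⁻¹)^(k+1) else 0) := by
  split
  · positivity
  · exact le_rfl

lemma summable_geom_half : Summable (fun k : ℕ => ((2:ℝ)⁻¹)^(k+1)) := by
  have hg : Summable (fun k : ℕ => ((2:ℝ)⁻¹)^k * 2⁻¹) :=
    (summable_geometric_of_lt_one (by norm_num) (by norm_num)).mul_right _
  exact hg.congr fun k => (pow_succ _ _).symm

lemma summable_ite (b : ℕ → Bool) :
    Summable (fun k => if b k then ((2:ℝ)⁻¹)^(k+1) else 0) :=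
  Summable.of_nonneg_of_le (ite_summand_nonneg b) (ite_summand_le b) summable_geom_half

lemma dsum_partial (n : ℕ) (x : ℝ) :
    ∑ k ∈ Finset.range n, (if dg k x then ((2:ℝ)⁻¹)^(k+1) else 0)
      = ⌊2^n * x⌋ / 2^n - ⌊x⌋ := by
  have := Finset.sum_range_sub (f := fun k => (⌊2^k * x⌋ : ℝ) / 2^k) n
  rw [Finset.sum_congr rfl (fun k _ => dg_telescope k x), this]
  norm_num

lemma dsum_eq {x : ℝ} (h0 : 0 ≤ x) (h1 : x < 1) : dsum x = x := by
  have hfx : ⌊x⌋ = 0 := Int.floor_eq_zero_iff.2 ⟨h0, by simpa using h1⟩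
  have hup : ∀ n : ℕ, (⌊2^n * x⌋ : ℝ) / 2^n ≤ x := by
    intro n
    have h2 : (0:ℝ) < 2^n := by positivity
    rw [div_le_iff₀ h2]
    have := Int.floor_le (2^n * x)
    linarith
  have hlo : ∀ n : ℕ, x - ((2:ℝ)⁻¹)^n ≤ (⌊2^n * x⌋ : ℝ) / 2^n := by
    intro n
    have h2 : (0:ℝ) < 2^n := by positivity
    rw [le_div_iff₀ h2]
    have := Int.lt_floor_add_one (2^n * x)
    have hinv : ((2:ℝ)⁻¹)^n * 2^n = 1 := by
      rw [← mul_pow]; norm_num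
    nlinarith
  have hlim : Filter.Tendsto (fun n : ℕ => x - ((2:ℝ)⁻¹)^n) Filter.atTop (nhds x) := by
    have := tendsto_pow_atTop_nhds_zero_of_lt_one (r := (2:ℝ)⁻¹) (by norm_num) (by norm_num)
    simpa using (tendsto_const_nhds (x := x)).sub this
  have htend : Filter.Tendsto (fun n : ℕ => (⌊2^n * x⌋ : ℝ) / 2^n) Filter.atTop (nhds x) :=
    tendsto_of_tendsto_of_tendsto_of_le_of_le hlim tendsto_const_nhds hlo hup
  have htend2 : Filter.Tendsto (fun n => ∑ k ∈ Finset.range n,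
      (if dg k x then ((2:ℝ)⁻¹)^(k+1) else 0)) Filter.atTop (nhds x) := by
    simp only [dsum_partial, hfx, Int.cast_zero, zero_div, sub_zero]
    exact htend
  exact tendsto_nhds_unique ((summable_ite (dg · x)).hasSum.tendsto_sum_nat) htend2



def nu : Measure ℝ := volume.restrict (Ico 0 1)

instance : IsProbabilityMeasure nu :=
  ⟨by simp [nu, Real.volume_Ico]⟩

def w (b : Set Bool) : ℝ≥0∞ := (if true ∈ b then 2⁻¹ else 0) + (if false ∈ b then 2⁻¹ else 0)

lemma measurableSet_E (s : Finset ℕ) (B : ℕ → Set Bool) :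
    MeasurableSet (⋂ k ∈ (s:Set ℕ), dg k ⁻¹' B k) :=
  MeasurableSet.biInter (s.countable_toSet) fun k _ => measurable_dg k .of_discrete

lemma vol_affine (c : ℝ) (S : Set ℝ) :
    volume ((fun x => 2*x - c)⁻¹' S) = 2⁻¹ * volume S := by
  have hfe : (fun x : ℝ => 2*x - c) = (fun y : ℝ => -c + y) ∘ (fun x : ℝ => 2*x) := by
    funext x; simp; ring
  rw [hfe, preimage_comp, Real.volume_preimage_mul_left (two_ne_zero), measure_preimage_add]
  congr 1
  rw [show |(2:ℝ)⁻¹| = 2⁻¹ from abs_of_pos (by norm_num),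
    ENNReal.ofReal_inv_of_pos (by norm_num), ENNReal.ofReal_ofNat]

lemma half_key (s : Finset ℕ) (B : ℕ → Set Bool) (t : Finset ℕ)
    (hts : ∀ k, k ∈ t ↔ k+1 ∈ s) (b : Bool) (c : ℤ) (I : Set ℝ)
    (hI : ∀ x : ℝ, x ∈ I ↔ 2*x - (c:ℝ) ∈ Ico (0:ℝ) 1) (hd0 : ∀ x ∈ I, dg 0 x = b) :
    (⋂ k ∈ (s:Set ℕ), dg k ⁻¹' B k) ∩ I =
      if 0 ∈ s ∧ b ∉ B 0 then ∅
      else ((fun x => 2*x - (c:ℝ))⁻¹' ((⋂ k ∈ (t:Set ℕ), dg k ⁻¹' B (k+1)) ∩ Ico (0:ℝ) 1)) := by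
  by_cases hcase : 0 ∈ s ∧ b ∉ B 0
  · rw [if_pos hcase]
    ext x
    simp only [mem_inter_iff, mem_empty_iff_false, iff_false, not_and]
    intro h1 h2
    have := mem_iInter₂.1 h1 0 hcase.1
    rw [mem_preimage, hd0 x h2] at this
    exact hcase.2 this
  · rw [if_neg hcase]
    ext x
    simp only [mem_inter_iff, mem_preimage, mem_iInter₂]
    constructor
    · rintro ⟨h1, h2⟩
      refine ⟨fun k hk => ?_, (hI x).1 h2⟩
      rw [dg_succ]
      exact h1 (k+1) ((hts k).1 hk)
    · rintro ⟨h1, h2⟩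
      have hxI : x ∈ I := (hI x).2 h2
      refine ⟨fun k hk => ?_, hxI⟩
      match k with
      | 0 =>
        rw [hd0 x hxI]
        by_contra hb
        exact hcase ⟨hk, hb⟩
      | (k+1) =>
        have := h1 k ((hts k).2 hk)
        rwa [dg_succ] at this

lemma cyl_aux : ∀ (n : ℕ) (s : Finset ℕ), s ⊆ Finset.range n → ∀ B : ℕ → Set Bool,
    nu (⋂ k ∈ (s:Set ℕ), dg k ⁻¹' B k) = ∏ k ∈ s, w (B k) := by
  intro n
  induction n with
  | zero =>
    intro s hs B
    rw [Finset.range_zero, Finset.subset_empty] at hs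
    subst hs
    simp
  | succ n ih =>
    intro s hs B
    classical
    set t := (s.erase 0).image (· - 1) with ht
    have hts : ∀ k, k ∈ t ↔ k + 1 ∈ s := by
      intro k
      simp only [ht, Finset.mem_image, Finset.mem_erase]
      constructor
      · rintro ⟨a, ⟨ha0, has⟩, rfl⟩
        have : a - 1 + 1 = a := by omega
        rwa [this]
      · intro h
        exact ⟨k+1, ⟨Nat.succ_ne_zero k, h⟩, rfl⟩
    have htr : t ⊆ Finset.range n := by
      intro k hk
      have := hs ((hts k).1 hk)
      rw [Finset.mem_range] at *
      omega
    have hih := ih t htr (fun k => B (k+1))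
    -- interval facts
    have hI0 : ∀ x : ℝ, x ∈ Ico (0:ℝ) 2⁻¹ ↔ 2*x - ((0:ℤ):ℝ) ∈ Ico (0:ℝ) 1 := by
      intro x; simp only [mem_Ico, Int.cast_zero, sub_zero]
      constructor <;> rintro ⟨a, b⟩ <;> constructor <;> linarith
    have hI1 : ∀ x : ℝ, x ∈ Ico (2⁻¹:ℝ) 1 ↔ 2*x - ((1:ℤ):ℝ) ∈ Ico (0:ℝ) 1 := by
      intro x; simp only [mem_Ico, Int.cast_one]
      constructor <;> rintro ⟨a, b⟩ <;> constructor <;> linarith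
    have key0 := half_key s B t hts false 0 (Ico (0:ℝ) 2⁻¹) hI0
      (fun x hx => dg_zero_false hx.1 hx.2)
    have key1 := half_key s B t hts true 1 (Ico (2⁻¹:ℝ) 1) hI1
      (fun x hx => dg_zero_true hx.1 hx.2)
    have hEm := measurableSet_E s B
    have hEm' := measurableSet_E t (fun k => B (k+1))
    have hsplit : nu (⋂ k ∈ (s:Set ℕ), dg k ⁻¹' B k)
        = volume ((⋂ k ∈ (s:Set ℕ), dg k ⁻¹' B k) ∩ Ico (0:ℝ) 2⁻¹)
          + volume ((⋂ k ∈ (s:Set ℕ), dg k ⁻¹' B k) ∩ Ico (2⁻¹:ℝ) 1) := by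
      rw [nu, Measure.restrict_apply hEm]
      rw [show (Ico (0:ℝ) 1) = Ico (0:ℝ) 2⁻¹ ∪ Ico (2⁻¹:ℝ) 1 from
        (Ico_union_Ico_eq_Ico (by norm_num) (by norm_num)).symm]
      rw [inter_union_distrib_left]
      exact measure_union ((Ico_disjoint_Ico_same (a:=(0:ℝ)) (b:=2⁻¹) (c:=1)).mono inter_subset_right
        inter_subset_right) (hEm.inter measurableSet_Ico)
    have harg : ∀ (c : ℤ) (bb : Bool),
        volume ((if 0 ∈ s ∧ bb ∉ B 0 then (∅ : Set ℝ)
          else ((fun x => 2*x - (c:ℝ))⁻¹' ((⋂ k ∈ (t:Set ℕ), dg k ⁻¹' B (k+1)) ∩ Ico (0:ℝ) 1))))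
        = if 0 ∈ s ∧ bb ∉ B 0 then 0 else 2⁻¹ * ∏ k ∈ t, w (B (k+1)) := by
      intro c bb
      split
      · simp
      · rw [vol_affine]
        congr 1
        rw [← Measure.restrict_apply hEm', ← nu, hih]
    rw [hsplit, key0, key1, harg 0 false, harg 1 true]
    -- product bookkeeping
    have hprod : ∏ k ∈ t, w (B (k+1)) = ∏ k ∈ s.erase 0, w (B k) := by
      have hinj : ∀ a ∈ s.erase 0, ∀ b ∈ s.erase 0, a - 1 = b - 1 → a = b := by
        intro a ha b hb hab
        simp only [Finset.mem_erase] at ha hb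
        omega
      rw [ht, Finset.prod_image hinj]
      apply Finset.prod_congr rfl
      intro k hk
      simp only [Finset.mem_erase] at hk
      have hkk : k - 1 + 1 = k := by omega
      rw [hkk]
    by_cases h0s : 0 ∈ s
    · have hsprod : ∏ k ∈ s, w (B k) = w (B 0) * ∏ k ∈ s.erase 0, w (B k) :=
        (Finset.mul_prod_erase s _ h0s).symm
      rw [hsprod, ← hprod, w]
      by_cases htB : true ∈ B 0 <;> by_cases hfB : false ∈ B 0 <;>
          simp only [h0s, htB, hfB, not_true, not_false_iff, and_true, and_false, true_and,
            false_and, if_true, if_false, ite_true, ite_false, add_zero, zero_add] <;>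
        first
        | rw [← add_mul, ENNReal.inv_two_add_inv_two, one_mul, ← add_mul,
            ENNReal.inv_two_add_inv_two, one_mul]
        | rw [← add_mul, ENNReal.inv_two_add_inv_two, one_mul]
        | simp [zero_mul]
    · have hs0 : s.erase 0 = s := Finset.erase_eq_of_notMem h0s
      simp only [h0s, false_and, if_false]
      rw [← add_mul, ENNReal.inv_two_add_inv_two, one_mul, hprod, hs0]


lemma cyl (s : Finset ℕ) (B : ℕ → Set Bool) :
    nu (⋂ k ∈ (s:Set ℕ), dg k ⁻¹' B k) = ∏ k ∈ s, w (B k) := by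
  refine cyl_aux (s.sup id + 1) s (fun k hk => ?_) B
  rw [Finset.mem_range]
  exact Nat.lt_succ_of_le (Finset.le_sup (f := id) hk)

/-- sign of a bit -/
def sgn (b : Bool) : ℤ := cond b 1 (-1)

/-- ±1 digit functions -/
def e (k : ℕ) (x : ℝ) : ℤ := sgn (dg k x)

lemma measurable_e (k : ℕ) : Measurable (e k) :=
  (measurable_to_countable' fun n => .of_discrete).comp (measurable_dg k)

lemma e_pm (k : ℕ) (x : ℝ) : e k x = 1 ∨ e k x = -1 := by
  cases h : dg k x <;> simp [e, sgn, h]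

/-- fair ±1 law as a set function -/
def fz (A : Set ℤ) : ℝ≥0∞ := (if (1:ℤ) ∈ A then 2⁻¹ else 0) + (if (-1:ℤ) ∈ A then 2⁻¹ else 0)

lemma w_sgn (A : Set ℤ) : w (sgn ⁻¹' A) = fz A := by
  simp only [w, fz, mem_preimage]
  rfl

lemma nu_e_inter (s : Finset ℕ) (A : ℕ → Set ℤ) :
    nu (⋂ k ∈ (s:Set ℕ), e k ⁻¹' A k) = ∏ k ∈ s, fz (A k) := by
  have h : ∀ k, e k ⁻¹' A k = dg k ⁻¹' (sgn ⁻¹' (A k)) := fun k => rfl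
  simp only [h]
  rw [cyl]
  exact Finset.prod_congr rfl fun k _ => w_sgn (A k)

lemma nu_e (k : ℕ) (A : Set ℤ) : nu (e k ⁻¹' A) = fz A := by
  have := nu_e_inter {k} (fun _ => A)
  simpa using this

lemma fz_mul {c : ℤ} (hc : c = 1 ∨ c = -1) (A : Set ℤ) : fz {z | z * c ∈ A} = fz A := by
  rcases hc with rfl | rfl
  · simp [fz]
  · simp only [fz, mem_setOf_eq, mul_neg, mul_one, neg_neg]
    exact add_comm _ _

/-- the underlying space -/
abbrev Om : Type := ℝ × ℝ

/-- the underlying measure -/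
def mu : Measure Om := nu.prod nu

instance : IsProbabilityMeasure mu := by
  rw [mu]; infer_instance

lemma master (g : ℕ → ℝ → ℤ) (hgm : ∀ n, Measurable (g n)) (hg1 : ∀ n p, g n p = 1 ∨ g n p = -1)
    (s : Finset ℕ) (A : ℕ → Set ℤ) (Bp : Set ℝ) (hBp : MeasurableSet Bp) :
    mu ((⋂ n ∈ (s:Set ℕ), (fun ω : Om => e n ω.2 * g n ω.1) ⁻¹' A n) ∩ (Prod.fst ⁻¹' Bp))
      = nu Bp * ∏ n ∈ s, fz (A n) := by
  set S := (⋂ n ∈ (s:Set ℕ), (fun ω : Om => e n ω.2 * g n ω.1) ⁻¹' A n) ∩ (Prod.fst ⁻¹' Bp)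
    with hS
  have hSm : MeasurableSet S := by
    refine MeasurableSet.inter ?_ (measurable_fst hBp)
    refine MeasurableSet.biInter s.countable_toSet fun n _ => ?_
    exact (((measurable_e n).comp measurable_snd).mul ((hgm n).comp measurable_fst)) .of_discrete
  have hslice : ∀ p : ℝ, nu (Prod.mk p ⁻¹' S) = Bp.indicator (fun _ => ∏ n ∈ s, fz (A n)) p := by
    intro p
    by_cases hp : p ∈ Bp
    · have hset : Prod.mk p ⁻¹' S = ⋂ n ∈ (s:Set ℕ), e n ⁻¹' {z | z * g n p ∈ A n} := by
        ext x
        simp only [hS, preimage_inter, mem_inter_iff, mem_preimage, hp, and_true, preimage_iInter,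
          mem_iInter]
        rfl
      rw [hset, nu_e_inter, indicator_of_mem hp]
      exact Finset.prod_congr rfl fun n _ => fz_mul (hg1 n p) (A n)
    · have hset : Prod.mk p ⁻¹' S = ∅ := by
        ext x
        simp only [hS, preimage_inter, mem_inter_iff, mem_preimage, hp, and_false,
          mem_empty_iff_false]
      rw [hset, indicator_of_notMem hp]
      simp
  rw [mu, Measure.prod_apply hSm]
  rw [lintegral_congr hslice, lintegral_indicator hBp, setLIntegral_const, mul_comm]


-- general measurable tsum-of-bits lemma
lemma measurable_bsum {α : Type*} {m : MeasurableSpace α} (f : ℕ → α → Bool)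
    (hf : ∀ j, Measurable[m] (f j)) :
    Measurable[m] (fun ω => ∑' k, if f k ω then ((2:ℝ)⁻¹)^(k+1) else 0) := by
  have hmeas : ∀ n : ℕ, Measurable[m] (fun ω => ∑ k ∈ Finset.range n,
      if f k ω then ((2:ℝ)⁻¹)^(k+1) else 0) := by
    intro n
    apply Finset.measurable_sum
    intro k _
    exact Measurable.ite ((hf k) (MeasurableSet.singleton true)) measurable_const
      measurable_const
  apply measurable_of_tendsto_metrizable hmeas
  rw [tendsto_pi_nhds]
  intro ω
  exact (summable_ite (f · ω)).hasSum.tendsto_sum_nat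

lemma measurable_dsum : Measurable dsum :=
  measurable_bsum (fun k x => dg k x) measurable_dg

lemma master_inter (g : ℕ → ℝ → ℤ) (hgm : ∀ n, Measurable (g n))
    (hg1 : ∀ n p, g n p = 1 ∨ g n p = -1) (s : Finset ℕ) (A : ℕ → Set ℤ) :
    mu (⋂ n ∈ (s:Set ℕ), (fun ω : Om => e n ω.2 * g n ω.1) ⁻¹' A n) = ∏ n ∈ s, fz (A n) := by
  have := master g hgm hg1 s A univ MeasurableSet.univ
  simpa using this

lemma master_single (g : ℕ → ℝ → ℤ) (hgm : ∀ n, Measurable (g n))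
    (hg1 : ∀ n p, g n p = 1 ∨ g n p = -1) (n : ℕ) (A : Set ℤ) :
    mu ((fun ω : Om => e n ω.2 * g n ω.1) ⁻¹' A) = fz A := by
  have := master_inter g hgm hg1 {n} (fun _ => A)
  simpa using this

lemma master_fst (Bp : Set ℝ) (hBp : MeasurableSet Bp) :
    mu (Prod.fst ⁻¹' Bp) = nu Bp := by
  have := master (fun _ _ => (1:ℤ)) (fun _ => measurable_const) (fun _ _ => Or.inl rfl)
    ∅ (fun _ => univ) Bp hBp
  simpa using this

lemma master_iIndep (g : ℕ → ℝ → ℤ) (hgm : ∀ n, Measurable (g n))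
    (hg1 : ∀ n p, g n p = 1 ∨ g n p = -1) :
    iIndepFun (m := fun _ : ℕ => (inferInstance : MeasurableSpace ℤ))
      (fun n (ω : Om) => e n ω.2 * g n ω.1) mu := by
  rw [iIndepFun_iff_measure_inter_preimage_eq_mul]
  intro S sets H
  have h1 : mu (⋂ i ∈ S, (fun ω : Om => e i ω.2 * g i ω.1) ⁻¹' sets i)
      = ∏ i ∈ S, fz (sets i) := master_inter g hgm hg1 S sets
  rw [h1]
  exact Finset.prod_congr rfl fun i _ => (master_single g hgm hg1 i (sets i)).symm

lemma master_map (g : ℕ → ℝ → ℤ) (hgm : ∀ n, Measurable (g n))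
    (hg1 : ∀ n p, g n p = 1 ∨ g n p = -1) (n m : ℕ) :
    mu.map (fun ω : Om => e n ω.2 * g n ω.1) = mu.map (fun ω : Om => e m ω.2 * g m ω.1) := by
  have hWn : Measurable (fun ω : Om => e n ω.2 * g n ω.1) :=
    ((measurable_e n).comp measurable_snd).mul ((hgm n).comp measurable_fst)
  have hWm : Measurable (fun ω : Om => e m ω.2 * g m ω.1) :=
    ((measurable_e m).comp measurable_snd).mul ((hgm m).comp measurable_fst)
  ext A hA
  rw [Measure.map_apply hWn hA, Measure.map_apply hWm hA,
    master_single g hgm hg1 n A, master_single g hgm hg1 m A]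

/-- P as a function on Om -/
def Pf (ω : Om) : ℝ := dsum ω.1

lemma measurable_Pf : Measurable Pf := measurable_dsum.comp measurable_fst

lemma master_indep (g : ℕ → ℝ → ℤ) (hgm : ∀ n, Measurable (g n))
    (hg1 : ∀ n p, g n p = 1 ∨ g n p = -1) :
    Indep (⨆ n, MeasurableSpace.comap (fun ω : Om => e n ω.2 * g n ω.1) inferInstance)
      (MeasurableSpace.comap Pf inferInstance) mu := by
  set W := fun n (ω : Om) => e n ω.2 * g n ω.1 with hW
  show Indep (⨆ n, MeasurableSpace.comap (W n) inferInstance)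
    (MeasurableSpace.comap Pf inferInstance) mu
  have hWm : ∀ n, Measurable (W n) := fun n =>
    ((measurable_e n).comp measurable_snd).mul ((hgm n).comp measurable_fst)
  refine IndepSets.indep (iSup_le fun n => (hWm n).comap_le) measurable_Pf.comap_le
    (isPiSystem_piiUnionInter _ (fun n => @MeasurableSpace.isPiSystem_measurableSet Om
      (MeasurableSpace.comap (W n) inferInstance)) univ)
    (@MeasurableSpace.isPiSystem_measurableSet Om (MeasurableSpace.comap Pf inferInstance))
    ?_ ?_ ?_
  · exact ((generateFrom_piiUnionInter_measurableSet
      (fun n => MeasurableSpace.comap (W n) inferInstance) univ).trans iSup_univ).symm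
  · exact (@MeasurableSpace.generateFrom_measurableSet Om
      (MeasurableSpace.comap Pf inferInstance)).symm
  · rw [IndepSets_iff]
    rintro t1 t2 ⟨u, -, f, hf, rfl⟩ ht2
    obtain ⟨Bb, hBb, rfl⟩ := ht2
    -- choose the preimage representations
    have hch : ∀ n, n ∈ u → ∃ A : Set ℤ, MeasurableSet A ∧ W n ⁻¹' A = f n := fun n hn => hf n hn
    choose! A hAm hApre using hch
    have ht1 : ⋂ n ∈ u, f n = ⋂ n ∈ (u : Set ℕ), W n ⁻¹' A n := by
      apply iInter₂_congr
      intro n hn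
      exact (hApre n hn).symm
    have hPev : Pf ⁻¹' Bb = Prod.fst ⁻¹' (dsum ⁻¹' Bb) := rfl
    have hBm : MeasurableSet (dsum ⁻¹' Bb) := measurable_dsum hBb
    rw [ht1, hPev]
    rw [master g hgm hg1 u A _ hBm, master_inter g hgm hg1 u A, master_fst _ hBm, mul_comm]

lemma map_Pf : mu.map Pf = volume.restrict (Icc (0:ℝ) 1) := by
  have h1 : mu.map Pf = (mu.map Prod.fst).map dsum := by
    rw [Measure.map_map measurable_dsum measurable_fst]
    rfl
  have h2 : mu.map Prod.fst = nu := by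
    rw [mu, Measure.map_fst_prod]
    simp
  have h3 : nu.map dsum = nu := by
    have hae : dsum =ᵐ[nu] id := by
      rw [nu]
      filter_upwards [ae_restrict_mem measurableSet_Ico] with x hx
      exact dsum_eq hx.1 hx.2
    rw [Measure.map_congr hae, Measure.map_id]
  rw [h1, h2, h3, nu, restrict_Ico_eq_restrict_Icc]


/-- constant one -/
def one1 (_ : ℕ) (_ : ℝ) : ℤ := 1
/-- the sign sequence from digits of the first coordinate -/
def sg (n : ℕ) (x : ℝ) : ℤ := e (Nat.unpair n).2 x

lemma measurable_one1 (n : ℕ) : Measurable (one1 n) := measurable_const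
lemma one1_pm (n : ℕ) (p : ℝ) : one1 n p = 1 ∨ one1 n p = -1 := Or.inl rfl
lemma measurable_sg (n : ℕ) : Measurable (sg n) := measurable_e _
lemma sg_pm (n : ℕ) (p : ℝ) : sg n p = 1 ∨ sg n p = -1 := e_pm _ _

/-- Y sequence -/
def Yf (n : ℕ) (ω : Om) : ℤ := e n ω.2 * one1 n ω.1
/-- Z sequence -/
def Zf (n : ℕ) (ω : Om) : ℤ := e n ω.2 * sg n ω.1

lemma measurable_Yf (n : ℕ) : Measurable (Yf n) :=
  ((measurable_e n).comp measurable_snd).mul ((measurable_one1 n).comp measurable_fst)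
lemma measurable_Zf (n : ℕ) : Measurable (Zf n) :=
  ((measurable_e n).comp measurable_snd).mul ((measurable_sg n).comp measurable_fst)

lemma Yf_pm (n : ℕ) (ω : Om) : Yf n ω = 1 ∨ Yf n ω = -1 := by
  rw [Yf, one1, mul_one]; exact e_pm n ω.2
lemma Zf_pm (n : ℕ) (ω : Om) : Zf n ω = 1 ∨ Zf n ω = -1 := by
  rw [Zf]
  rcases e_pm n ω.2 with h | h <;> rcases sg_pm n ω.1 with h' | h' <;> rw [h, h'] <;> norm_num

lemma YZ_mul (n : ℕ) (ω : Om) : Yf n ω * Zf n ω = e (Nat.unpair n).2 ω.1 := by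
  rw [Yf, Zf, one1, mul_one, sg, ← mul_assoc]
  rcases e_pm n ω.2 with h | h <;> rw [h] <;> norm_num

/-- Kolmogorov 0-1 law for our sequences -/
lemma trivial_tail (f : ℕ → Om → ℤ) (hm : ∀ n, Measurable (f n))
    (hi : iIndepFun (m := fun _ : ℕ => (inferInstance : MeasurableSpace ℤ)) f mu) :
    TrivialSigma mu (tailSigma f) := by
  intro A hA
  have heq : tailSigma f = Filter.limsup (fun n => MeasurableSpace.comap (f n)
      (inferInstance : MeasurableSpace ℤ)) Filter.atTop := by
    rw [Filter.limsup_eq_iInf_iSup_of_nat]; rfl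
  rw [heq] at hA
  exact measure_zero_or_one_of_measurableSet_limsup_atTop (fun n => (hm n).comap_le) hi hA

lemma Pf_tail : Measurable[tailSigma (fun n ω => (Yf n ω, Zf n ω))] Pf := by
  rw [tailSigma, measurable_iff_comap_le]
  refine le_iInf fun k => ?_
  rw [← measurable_iff_comap_le]
  set m := (⨆ n, ⨆ _ : k ≤ n, MeasurableSpace.comap
    (fun ω : Om => (Yf n ω, Zf n ω)) inferInstance) with hm
  set F := fun (j : ℕ) (ω : Om) => decide (Yf (Nat.pair k j) ω * Zf (Nat.pair k j) ω = 1)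
    with hF
  have hFm : ∀ j, Measurable[m] (F j) := by
    intro j
    have h0 : Measurable[MeasurableSpace.comap
        (fun ω : Om => (Yf (Nat.pair k j) ω, Zf (Nat.pair k j) ω)) inferInstance]
        (fun ω : Om => (Yf (Nat.pair k j) ω, Zf (Nat.pair k j) ω)) :=
      measurable_iff_comap_le.2 le_rfl
    have h1 : Measurable (fun q : ℤ × ℤ => decide (q.1 * q.2 = 1)) := by
      exact measurable_of_countable _
    exact (h1.comp h0).mono
      (le_iSup_of_le (Nat.pair k j) (le_iSup_of_le (Nat.left_le_pair k j) le_rfl)) le_rfl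
  have hPeq : Pf = fun ω : Om => ∑' j, if F j ω then ((2:ℝ)⁻¹)^(j+1) else 0 := by
    funext ω
    rw [Pf, dsum]
    congr 1
    funext j
    have hcond : (dg j ω.1 = true) ↔ (F j ω = true) := by
      rw [hF]
      simp only [decide_eq_true_eq, YZ_mul, Nat.unpair_pair]
      cases h : dg j ω.1 <;> simp [e, sgn, h]
    exact if_congr hcond rfl rfl
  rw [hPeq]
  exact measurable_bsum F hFm

lemma mu_Pf_half : mu (Pf ⁻¹' Iio 2⁻¹) = 2⁻¹ := by
  rw [← Measure.map_apply measurable_Pf measurableSet_Iio, map_Pf,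
    Measure.restrict_apply measurableSet_Iio]
  have hset : Iio (2⁻¹:ℝ) ∩ Icc 0 1 = Ico (0:ℝ) 2⁻¹ := by
    ext x
    simp only [mem_inter_iff, mem_Iio, mem_Icc, mem_Ico]
    constructor
    · rintro ⟨h1, h2, h3⟩; exact ⟨h2, h1⟩
    · rintro ⟨h1, h2⟩; exact ⟨h2, h1, by linarith⟩
  rw [hset, Real.volume_Ico]
  rw [show (2⁻¹:ℝ) - 0 = 2⁻¹ by norm_num, ENNReal.ofReal_inv_of_pos (by norm_num),
    ENNReal.ofReal_ofNat]

lemma joint_nontrivial : ¬ TrivialSigma mu (tailSigma (fun n ω => (Yf n ω, Zf n ω))) := by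
  intro h
  have hA := h (Pf ⁻¹' Iio 2⁻¹) (Pf_tail measurableSet_Iio)
  rw [mu_Pf_half] at hA
  rcases hA with h0 | h1
  · exact (by norm_num : (2⁻¹:ℝ≥0∞) ≠ 0) h0
  · exact (by norm_num : (2⁻¹:ℝ≥0∞) ≠ 1) h1


end Stmt6Aux
end

/-- There exist two i.i.d. `±1`-valued sequences `Y`, `Z`, each independent of a
uniform-[0,1] random variable `P` and each with a trivial tail sigma-field, such that
`P` is measurable with respect to the tail sigma-field of the joint sequence
`((Y n, Z n) : n)`, which is therefore nontrivial. -/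
theorem stmt6 :
    ∃ (Ω : Type) (mΩ : MeasurableSpace Ω) (μ : Measure Ω) (_ : IsProbabilityMeasure μ)
      (Y Z : ℕ → Ω → ℤ) (P : Ω → ℝ),
      (∀ n, Measurable (Y n)) ∧ (∀ n, Measurable (Z n)) ∧ Measurable P ∧
      (∀ n ω, Y n ω = 1 ∨ Y n ω = -1) ∧ (∀ n ω, Z n ω = 1 ∨ Z n ω = -1) ∧
      iIndepFun (m := fun _ : ℕ => (inferInstance : MeasurableSpace ℤ)) Y μ ∧
      (∀ n, μ.map (Y n) = μ.map (Y 0)) ∧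
      iIndepFun (m := fun _ : ℕ => (inferInstance : MeasurableSpace ℤ)) Z μ ∧
      (∀ n, μ.map (Z n) = μ.map (Z 0)) ∧
      Indep (⨆ n, MeasurableSpace.comap (Y n) inferInstance)
        (MeasurableSpace.comap P inferInstance) μ ∧
      Indep (⨆ n, MeasurableSpace.comap (Z n) inferInstance)
        (MeasurableSpace.comap P inferInstance) μ ∧
      μ.map P = volume.restrict (Set.Icc (0 : ℝ) 1) ∧
      TrivialSigma μ (tailSigma Y) ∧ TrivialSigma μ (tailSigma Z) ∧
      Measurable[tailSigma (fun n ω => (Y n ω, Z n ω))] P ∧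
      ¬ TrivialSigma μ (tailSigma (fun n ω => (Y n ω, Z n ω))) := by
  refine ⟨Stmt6Aux.Om, inferInstance, Stmt6Aux.mu, inferInstance, Stmt6Aux.Yf, Stmt6Aux.Zf,
    Stmt6Aux.Pf,
    Stmt6Aux.measurable_Yf, Stmt6Aux.measurable_Zf, Stmt6Aux.measurable_Pf, Stmt6Aux.Yf_pm,
    Stmt6Aux.Zf_pm,
    Stmt6Aux.master_iIndep Stmt6Aux.one1 Stmt6Aux.measurable_one1 Stmt6Aux.one1_pm,
    (fun n => Stmt6Aux.master_map Stmt6Aux.one1 Stmt6Aux.measurable_one1 Stmt6Aux.one1_pm n 0),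
    Stmt6Aux.master_iIndep Stmt6Aux.sg Stmt6Aux.measurable_sg Stmt6Aux.sg_pm,
    (fun n => Stmt6Aux.master_map Stmt6Aux.sg Stmt6Aux.measurable_sg Stmt6Aux.sg_pm n 0),
    Stmt6Aux.master_indep Stmt6Aux.one1 Stmt6Aux.measurable_one1 Stmt6Aux.one1_pm,
    Stmt6Aux.master_indep Stmt6Aux.sg Stmt6Aux.measurable_sg Stmt6Aux.sg_pm,
    Stmt6Aux.map_Pf,
    Stmt6Aux.trivial_tail Stmt6Aux.Yf Stmt6Aux.measurable_Yf
      (Stmt6Aux.master_iIndep Stmt6Aux.one1 Stmt6Aux.measurable_one1 Stmt6Aux.one1_pm),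
    Stmt6Aux.trivial_tail Stmt6Aux.Zf Stmt6Aux.measurable_Zf
      (Stmt6Aux.master_iIndep Stmt6Aux.sg Stmt6Aux.measurable_sg Stmt6Aux.sg_pm),
    Stmt6Aux.Pf_tail, Stmt6Aux.joint_nontrivial⟩
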